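/- Let n ≥ 2. Then the directed cycle C_n has no totally symmetric n-ary polymorphism: there is no n-ary polymorphism t of C_n such that t(x₁,...,xₙ) = t(y₁,...,yₙ) whenever {x₁,...,xₙ} = {y₁,...,yₙ} as sets. In particular, any n-ary polymorphism t satisfies t(0,1,...,n−1) ≠ t(1,2,...,n−1,0). -/

import Mathlib

lemma aux_surj (n : ℕ) (hn : 2 ≤ n) :
    Function.Surjective (fun i : Fin n => (i : ZMod n)) := by
  haveI : NeZero n := ⟨by omega⟩
  intro z
  refine ⟨⟨z.val, z.val_lt⟩, ?_⟩
  simp [ZMod.natCast_val, ZMod.cast_id]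

/-- For `n ≥ 2`, the directed cycle `C_n` has no totally symmetric `n`-ary polymorphism.
In particular any `n`-ary polymorphism `t` satisfies
`t (0,1,…,n-1) ≠ t (1,2,…,n-1,0)`. -/
theorem stmt_5 (n : ℕ) (hn : 2 ≤ n) :
    (¬ ∃ t : (Fin n → ZMod n) → ZMod n,
        (∀ a b : Fin n → ZMod n, (∀ i, b i = a i + 1) → t b = t a + 1) ∧
        (∀ x y : Fin n → ZMod n, Set.range x = Set.range y → t x = t y)) ∧
    (∀ t : (Fin n → ZMod n) → ZMod n,
        (∀ a b : Fin n → ZMod n, (∀ i, b i = a i + 1) → t b = t a + 1) →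
        t (fun i => (i : ZMod n)) ≠ t (fun i => (i : ZMod n) + 1)) := by
  haveI : NeZero n := ⟨by omega⟩
  haveI : Fact (1 < n) := ⟨by omega⟩
  have hone : (1 : ZMod n) ≠ 0 := one_ne_zero
  have key : ∀ t : (Fin n → ZMod n) → ZMod n,
      (∀ a b : Fin n → ZMod n, (∀ i, b i = a i + 1) → t b = t a + 1) →
      t (fun i => (i : ZMod n)) ≠ t (fun i => (i : ZMod n) + 1) := by
    intro t hpoly h
    have := hpoly (fun i => (i : ZMod n)) (fun i => (i : ZMod n) + 1) (fun i => rfl)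
    rw [← h] at this
    exact hone (left_eq_add.mp this)
  refine ⟨?_, key⟩
  rintro ⟨t, hpoly, hsym⟩
  apply key t hpoly
  apply hsym
  have h1 : Set.range (fun i : Fin n => (i : ZMod n)) = Set.univ :=
    Set.range_eq_univ.mpr (aux_surj n hn)
  have h2 : Set.range (fun i : Fin n => (i : ZMod n) + 1) = Set.univ := by
    rw [Set.range_eq_univ]
    intro z
    obtain ⟨i, hi⟩ := aux_surj n hn (z - 1)
    exact ⟨i, by simp at hi; simp [hi]⟩
  rw [h1, h2]
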